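/- Let μ be a probability measure on ℝ with finite second moment, and let z ∈ ℂ with Im(z) > 0. Then | ∫_ℝ ((t : ℂ) − z)⁻¹ dμ(t) + z⁻¹ | ≤ (∫_ℝ t² dμ(t))^{1/2} / (Im z)². -/

import Mathlib

open MeasureTheory

lemma abs_integrable_of_sq {μ : Measure ℝ} [IsProbabilityMeasure μ]
    (h2 : Integrable (fun t : ℝ => t ^ 2) μ) :
    Integrable (fun t : ℝ => |t|) μ := by
  have : Integrable (fun t : ℝ => 1 + t ^ 2) μ := (integrable_const 1).add h2
  refine this.mono' (measurable_abs.aestronglyMeasurable) ?_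
  filter_upwards with t
  rw [Real.norm_eq_abs, abs_abs]
  rcases le_or_gt (|t|) 1 with h | h
  · nlinarith [sq_nonneg t]
  · nlinarith [sq_abs t]

lemma integral_abs_le_sqrt {μ : Measure ℝ} [IsProbabilityMeasure μ]
    (h2 : Integrable (fun t : ℝ => t ^ 2) μ) :
    (∫ t : ℝ, |t| ∂μ) ≤ Real.sqrt (∫ t : ℝ, t ^ 2 ∂μ) := by
  have hpq : (2 : ℝ).HolderConjugate 2 := Real.HolderConjugate.two_two
  have hf : MemLp (fun t : ℝ => |t|) (ENNReal.ofReal 2) μ := by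
    have : ENNReal.ofReal 2 = 2 := by norm_num
    rw [this, memLp_two_iff_integrable_sq measurable_abs.aestronglyMeasurable]
    simpa [sq_abs] using h2
  have hg : MemLp (fun _ : ℝ => (1 : ℝ)) (ENNReal.ofReal 2) μ := memLp_const 1
  have := integral_mul_le_Lp_mul_Lq_of_nonneg hpq
    (f := fun t : ℝ => |t|) (g := fun _ => (1 : ℝ))
    (Filter.Eventually.of_forall fun t => abs_nonneg t)
    (Filter.Eventually.of_forall fun _ => zero_le_one) hf hg
  simp only [mul_one, Real.rpow_two] at this
  calc (∫ t : ℝ, |t| ∂μ) ≤ (∫ t : ℝ, |t| ^ (2 : ℝ) ∂μ) ^ (1 / (2:ℝ)) *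
        (∫ _ : ℝ, (1:ℝ) ^ (2:ℝ) ∂μ) ^ (1 / (2:ℝ)) := by
        simpa using this
    _ = Real.sqrt (∫ t : ℝ, t ^ 2 ∂μ) := by
        have h1 : (fun t : ℝ => |t| ^ (2 : ℝ)) = fun t : ℝ => t ^ 2 := by
          funext t
          rw [show ((2:ℝ) = ((2:ℕ):ℝ)) by norm_num, Real.rpow_natCast, sq_abs]
        rw [h1]
        simp [Real.sqrt_eq_rpow]

/-- Stieltjes transform estimate: for a probability measure `μ` on `ℝ` with finite second moment
and `z` in the upper half-plane, `|∫ (t − z)⁻¹ dμ(t) + z⁻¹| ≤ (∫ t² dμ)^{1/2} / (Im z)²`. -/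
theorem stieltjes_transform_sub_point_mass_bound
    (μ : Measure ℝ) [IsProbabilityMeasure μ]
    (h2 : Integrable (fun t : ℝ => t ^ 2) μ)
    (z : ℂ) (hz : 0 < z.im) :
    ‖(∫ t : ℝ, ((t : ℂ) - z)⁻¹ ∂μ) + z⁻¹‖ ≤ Real.sqrt (∫ t : ℝ, t ^ 2 ∂μ) / z.im ^ 2 := by
  have hzne : z ≠ 0 := fun h => by simp [h] at hz
  have him : ∀ t : ℝ, z.im ≤ ‖(t : ℂ) - z‖ := fun t => by
    have := Complex.abs_im_le_norm ((t : ℂ) - z)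
    simp only [Complex.sub_im, Complex.ofReal_im, zero_sub, abs_neg] at this
    calc z.im ≤ |z.im| := le_abs_self _
      _ ≤ _ := this
  have hne : ∀ t : ℝ, ((t : ℂ) - z) ≠ 0 := fun t h => by
    have := him t; rw [h] at this; simp at this; linarith
  have hzim : z.im ≤ ‖z‖ := (le_abs_self _).trans (Complex.abs_im_le_norm z)
  -- integrability of (t - z)⁻¹
  have hmeas : AEStronglyMeasurable (fun t : ℝ => ((t : ℂ) - z)⁻¹) μ :=
    (Continuous.inv₀ (by continuity) hne).aestronglyMeasurable
  have hint : Integrable (fun t : ℝ => ((t : ℂ) - z)⁻¹) μ := by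
    refine (integrable_const (z.im)⁻¹).mono' hmeas ?_
    filter_upwards with t
    rw [norm_inv]
    exact inv_anti₀ hz (him t)
  have habs : Integrable (fun t : ℝ => |t|) μ := abs_integrable_of_sq h2
  -- rewrite the sum as a single integral
  have key : (∫ t : ℝ, ((t : ℂ) - z)⁻¹ ∂μ) + z⁻¹
      = ∫ t : ℝ, (t : ℂ) * (((t : ℂ) - z)⁻¹ * z⁻¹) ∂μ := by
    have hsum : (∫ t : ℝ, ((t : ℂ) - z)⁻¹ ∂μ) + z⁻¹
        = ∫ t : ℝ, (((t : ℂ) - z)⁻¹ + z⁻¹) ∂μ := by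
      rw [integral_add hint (integrable_const _), integral_const]
      simp
    rw [hsum]
    refine integral_congr_ae (Filter.Eventually.of_forall fun t => ?_)
    have h1 : ((t:ℂ) - z) * ((t:ℂ) - z)⁻¹ = 1 := mul_inv_cancel₀ (hne t)
    have hzz : z * z⁻¹ = 1 := mul_inv_cancel₀ hzne
    linear_combination (-(z⁻¹)) * h1 + (-(((t:ℂ) - z)⁻¹)) * hzz
  rw [key]
  calc ‖∫ t : ℝ, (t : ℂ) * (((t : ℂ) - z)⁻¹ * z⁻¹) ∂μ‖
      ≤ ∫ t : ℝ, ‖(t : ℂ) * (((t : ℂ) - z)⁻¹ * z⁻¹)‖ ∂μ := norm_integral_le_integral_norm _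
    _ ≤ ∫ t : ℝ, |t| / z.im ^ 2 ∂μ := by
        refine integral_mono_of_nonneg (Filter.Eventually.of_forall fun t => norm_nonneg _)
          (habs.div_const _) (Filter.Eventually.of_forall fun t => ?_)
        show ‖(t:ℂ) * (((t:ℂ) - z)⁻¹ * z⁻¹)‖ ≤ |t| / z.im ^ 2
        rw [norm_mul, norm_mul, norm_inv, norm_inv, Complex.norm_real, Real.norm_eq_abs]
        rw [div_eq_mul_inv]
        refine mul_le_mul_of_nonneg_left ?_ (abs_nonneg t)
        calc ‖(t : ℂ) - z‖⁻¹ * ‖z‖⁻¹ ≤ (z.im)⁻¹ * (z.im)⁻¹ := by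
              gcongr <;> first | exact hz.le | exact him t
          _ = ((z.im ^ 2))⁻¹ := by rw [← mul_inv]; ring_nf
    _ = (∫ t : ℝ, |t| ∂μ) / z.im ^ 2 := by rw [integral_div]
    _ ≤ Real.sqrt (∫ t : ℝ, t ^ 2 ∂μ) / z.im ^ 2 :=
        div_le_div_of_nonneg_right (integral_abs_le_sqrt h2) (by positivity)
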